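/- arXiv:0909.4598 — 2 statements merged into one kernel-verified Lean document; each statement's English description precedes it below -/
import Mathlib

section
/- Let X be a set, f : X → X, and P ⊆ X. For each point z whose forward orbit enters P, let k(z) = min{k > 0 : f^k(z) ∈ P} be the first entrance time and let L(z) be a set containing z with f^{k(z)}(L(z)) ⊆ P (the first pullback). Assume: (i) for any two such points z, z', the sets L(z) and L(z') are either disjoint or one contains the other; (ii) if L(z) is strictly contained in L(z') then k(z) > k(z'). Then for any two such points z, z': if z' ∉ L(z), the sets L(z) and L(z') are disjoint. -/
theorem stmt_10 {X : Type*} (f : X → X) (P : Set X) (k : X → ℕ) (L : X → Set X)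
    (hmem : ∀ z, z ∈ L z)
    (hkpos : ∀ z, 0 < k z)
    (hfirst : ∀ z, ∀ j, 0 < j → j < k z → f^[j] z ∉ P)
    (himg : ∀ z, f^[k z] '' L z ⊆ P)
    (hnested : ∀ z z', Disjoint (L z) (L z') ∨ L z ⊆ L z' ∨ L z' ⊆ L z)
    (hdepth : ∀ z z', L z ⊂ L z' → k z' < k z) :
    ∀ z z', z' ∉ L z → Disjoint (L z) (L z') := by
  intro z z' hz'
  rcases hnested z z' with h | h | h
  · exact h
  · rcases eq_or_ssubset_of_subset h with heq | hss
    · exact absurd (heq ▸ hmem z') hz'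
    · exact absurd (himg z' ⟨z, h (hmem z), rfl⟩)
        (hfirst z (k z') (hkpos z') (hdepth z z' hss))
  · exact absurd (h (hmem z')) hz'
end

section
/- Let X be a set, f : X → X, and let P : ℕ → X → Set X be a family of 'puzzle pieces' satisfying: (i) x ∈ P(n, x) for all n, x; (ii) monotonicity: P(n+1, x) ⊆ P(n, x); (iii) compatibility: for all n, x, the image f(P(n+1, x)) equals P(n, f(x)); (iv) rigidity: for all n and all x, y, if y ∈ P(n, x) then P(n, y) = P(n, x). Fix points z, c and integers n ≥ 0, r ≥ 1, and suppose r is the first entrance time of z into P(n, f^r(z)), i.e. for all 0 ≤ s < r, f^s(z) ∉ P(n, f^r(z)). Then there is at most one index i with 0 ≤ i < r such that c ∈ P(n + r - i, f^i(z)). -/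
theorem stmt_12 {X : Type*} (f : X → X) (P : ℕ → X → Set X)
    (hmem : ∀ n x, x ∈ P n x)
    (hmono : ∀ n x, P (n + 1) x ⊆ P n x)
    (hcompat : ∀ n x, f '' P (n + 1) x = P n (f x))
    (hrigid : ∀ n x y, y ∈ P n x → P n y = P n x)
    (z c : X) (n r : ℕ) (hr : 1 ≤ r)
    (hfirst : ∀ s, s < r → f^[s] z ∉ P n (f^[r] z)) :
    ∀ i j, i < r → j < r → c ∈ P (n + r - i) (f^[i] z) →
      c ∈ P (n + r - j) (f^[j] z) → i = j := by
  -- iterated compatibility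
  have hiter : ∀ k m (x y : X), y ∈ P (m + k) x → f^[k] y ∈ P m (f^[k] x) := by
    intro k
    induction k with
    | zero => intro m x y h; simpa using h
    | succ k ih =>
      intro m x y h
      have h1 : f y ∈ P (m + k) (f x) := by
        rw [← hcompat (m + k) x]
        exact ⟨y, h, rfl⟩
      have := ih m (f x) (f y) h1
      simpa [Function.iterate_succ_apply] using this
  -- iterated monotonicity
  have hmono' : ∀ k m (x : X), P (m + k) x ⊆ P m x := by
    intro k
    induction k with
    | zero => intro m x; simp
    | succ k ih =>
      intro m x
      exact (hmono (m + k) x).trans (ih m x)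
  -- core: i < j gives a contradiction
  have core : ∀ i j, i < j → j < r → c ∈ P (n + r - i) (f^[i] z) →
      c ∈ P (n + r - j) (f^[j] z) → False := by
    intro i j hij hjr hci hcj
    have hir : i < r := hij.trans hjr
    have h1 : f^[i] z ∈ P (n + r - i) c := by
      rw [hrigid _ _ _ hci]; exact hmem _ _
    have heq : n + r - i = (n + r - j) + (j - i) := by omega
    have h2 : f^[i] z ∈ P (n + r - j) c := hmono' (j - i) (n + r - j) c (heq ▸ h1)
    have h3 : f^[i] z ∈ P (n + r - j) (f^[j] z) := by
      rwa [hrigid _ _ _ hcj] at h2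
    have heq2 : n + r - j = n + (r - j) := by omega
    have h4 : f^[r - j] (f^[i] z) ∈ P n (f^[r - j] (f^[j] z)) :=
      hiter (r - j) n _ _ (heq2 ▸ h3)
    have e1 : f^[r - j] (f^[j] z) = f^[r] z := by
      rw [← Function.iterate_add_apply]; congr 1; omega
    have e2 : f^[r - j] (f^[i] z) = f^[r - j + i] z := by
      rw [← Function.iterate_add_apply]
    rw [e1, e2] at h4
    exact hfirst (r - j + i) (by omega) h4
  intro i j hi hj hci hcj
  rcases lt_trichotomy i j with h | h | h
  · exact absurd (core i j h hj hci hcj) (by simp)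
  · exact h
  · exact absurd (core j i h hi hcj hci) (by simp)
end
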